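/- For every α ∈ (0,1) and t ∈ ℝ, CVaR satisfies the upper bound CVaR_{1−α}(X) ≤ t + (1/α) E[(X − t)⁺] whenever P(X > VaR_{1−α}(X)) = α, with equality at t = VaR_{1−α}(X); hence CVaR_{1−α}(X) = inf_t { t + (1/α) E[(X−t)⁺] }. -/

import Mathlib

open MeasureTheory

/-- The Value-at-Risk `VaR_{1−α}(X) = inf {t : P(X ≤ t) ≥ 1−α}`. -/
noncomputable def VaR {Ω : Type*} [MeasurableSpace Ω] (P : Measure Ω) (X : Ω → ℝ)
    (α : ℝ) : ℝ :=
  sInf {t : ℝ | 1 - α ≤ (P {ω | X ω ≤ t}).toReal}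

/-- Rockafellar–Uryasev: with `CVaR_{1−α}(X) = E[X | X > VaR_{1−α}(X)]` and
`P(X > VaR_{1−α}(X)) = α`, for every `t`, `CVaR_{1−α}(X) ≤ t + (1/α) E[(X − t)⁺]`,
with equality at `t = VaR_{1−α}(X)`; hence
`CVaR_{1−α}(X) = inf_t { t + (1/α) E[(X−t)⁺] }`. -/
theorem cvar_rockafellar_uryasev
    {Ω : Type*} [MeasurableSpace Ω] (P : Measure Ω) [IsProbabilityMeasure P]
    (X : Ω → ℝ) (hX : Measurable X) (hXint : Integrable X P)
    (hcont : Continuous fun t : ℝ => (P {ω | X ω ≤ t}).toReal)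
    (α : ℝ) (hα : α ∈ Set.Ioo (0 : ℝ) 1)
    (hPd : (P {ω | VaR P X α < X ω}).toReal = α) :
    (∀ t : ℝ,
        (∫ ω in {ω | VaR P X α < X ω}, X ω ∂P) / α ≤
          t + (1 / α) * ∫ ω, max (X ω - t) 0 ∂P) ∧
      (∫ ω in {ω | VaR P X α < X ω}, X ω ∂P) / α =
        VaR P X α + (1 / α) * ∫ ω, max (X ω - VaR P X α) 0 ∂P ∧
      (∫ ω in {ω | VaR P X α < X ω}, X ω ∂P) / α =
        ⨅ t : ℝ, (t + (1 / α) * ∫ ω, max (X ω - t) 0 ∂P)  := by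
  obtain ⟨hα0, hα1⟩ := hα
  set v := VaR P X α with hv
  set A := {ω | v < X ω} with hA
  have hAm : MeasurableSet A := measurableSet_lt measurable_const hX
  have hXA : IntegrableOn X A P := hXint.integrableOn
  have hmaxint : ∀ t : ℝ, Integrable (fun ω => max (X ω - t) 0) P := fun t =>
    (hXint.sub (integrable_const t)).pos_part
  have hconst : ∀ t : ℝ, IntegrableOn (fun _ : Ω => t) A P :=
    fun t => integrableOn_const (measure_ne_top _ _) enorm_ne_top
  have hsub : ∀ t : ℝ, ∫ ω in A, (X ω - t) ∂P = (∫ ω in A, X ω ∂P) - t * α := by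
    intro t
    rw [integral_sub hXA (hconst t), setIntegral_const, measureReal_def, hPd, smul_eq_mul, mul_comm]
  have key : ∀ t : ℝ, (∫ ω in A, X ω ∂P) / α ≤ t + (1/α) * ∫ ω, max (X ω - t) 0 ∂P := by
    intro t
    have h1 : ∫ ω in A, (X ω - t) ∂P ≤ ∫ ω, max (X ω - t) 0 ∂P := by
      calc ∫ ω in A, (X ω - t) ∂P ≤ ∫ ω in A, max (X ω - t) 0 ∂P :=
            setIntegral_mono_on (hXA.sub (hconst t)) ((hmaxint t).integrableOn) hAm
              (fun ω _ => le_max_left _ _)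
        _ ≤ ∫ ω, max (X ω - t) 0 ∂P :=
            setIntegral_le_integral (hmaxint t)
              (Filter.Eventually.of_forall fun ω => le_max_right _ _)
    rw [hsub t] at h1
    rw [div_le_iff₀ hα0]
    have : (t + 1 / α * ∫ ω, max (X ω - t) 0 ∂P) * α
        = t * α + ∫ ω, max (X ω - t) 0 ∂P := by
      field_simp
    linarith [this]
  have heq : ∫ ω, max (X ω - v) 0 ∂P = ∫ ω in A, (X ω - v) ∂P := by
    rw [← integral_indicator hAm]
    congr 1
    funext ω
    by_cases h : ω ∈ A
    · rw [Set.indicator_of_mem h, max_eq_left (sub_nonneg.2 (le_of_lt h))]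
    · rw [Set.indicator_of_notMem h,
        max_eq_right (sub_nonpos.2 (le_of_not_gt h))]
  have heq2 : (∫ ω in A, X ω ∂P) / α
      = v + (1 / α) * ∫ ω, max (X ω - v) 0 ∂P := by
    rw [heq, hsub v]
    field_simp
    ring
  refine ⟨key, heq2, le_antisymm (le_ciInf key) ?_⟩
  calc (⨅ t : ℝ, (t + (1 / α) * ∫ ω, max (X ω - t) 0 ∂P))
      ≤ v + (1 / α) * ∫ ω, max (X ω - v) 0 ∂P :=
        ciInf_le ⟨(∫ ω in A, X ω ∂P) / α, by
          rintro x ⟨t, rfl⟩; exact key t⟩ v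
    _ = (∫ ω in A, X ω ∂P) / α := heq2.symm
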